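/- For the weight function w(i,j) = j/i, if b(n) > e·ln(n) + α and b(N) ≤ e·ln(N) + α + o(1) holds for all N (i.e., for every ε > 0, b(N) ≤ e·ln N + α + ε for all sufficiently large N), then n appears in the jumping pattern of only finitely many N; that is, n ∉ 𝒜_∞. -/
import Mathlib


/-- Minimal cost `b(n)` of a jumping pattern from `n` down to `1`:
`b(1)=0` and `b(n) = min_{1 <= k < n} (w(k,n) + b(k))`. -/
noncomputable def minCost (w : ℕ → ℕ → ℝ) : ℕ → ℝ
  | 0 => 0
  | 1 => 0
  | (n+2) =>
    ((Finset.Icc 1 (n+1)).attach).inf'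
      ⟨⟨1, by simp⟩, Finset.mem_attach _ _⟩
      (fun k => w k.1 (n+2) + minCost w k.1)
decreasing_by
  have := Finset.mem_Icc.mp k.2; omega

/-- The lexicographically-first cost-minimizing jump sequence. -/
noncomputable def jumpSeq (w : ℕ → ℕ → ℝ) : ℕ → ℕ := fun n =>
  if n ≤ 1 then 1
  else sInf {k | 1 ≤ k ∧ k < n ∧ w k n + minCost w k = minCost w n}

lemma minCost_one (w : ℕ → ℕ → ℝ) : minCost w 1 = 0 := by rw [minCost]
lemma minCost_zero (w : ℕ → ℕ → ℝ) : minCost w 0 = 0 := by rw [minCost]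

lemma jumpSeq_le_one (w : ℕ → ℕ → ℝ) (p : ℕ) (hp : p ≤ 1) : jumpSeq w p = 1 := by
  simp [jumpSeq, hp]

lemma jumpSeq_spec (w : ℕ → ℕ → ℝ) (p : ℕ) (hp : 2 ≤ p) :
    1 ≤ jumpSeq w p ∧ jumpSeq w p < p ∧
      w (jumpSeq w p) p + minCost w (jumpSeq w p) = minCost w p := by
  obtain ⟨m, rfl⟩ : ∃ m, p = m + 2 := ⟨p - 2, by omega⟩
  have hmc : minCost w (m+2) =
      ((Finset.Icc 1 (m+1)).attach).inf' ⟨⟨1, by simp⟩, Finset.mem_attach _ _⟩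
        (fun k => w k.1 (m+2) + minCost w k.1) := by
    rw [minCost]
  obtain ⟨k, -, hk⟩ := Finset.exists_mem_eq_inf' (⟨⟨1, by simp⟩, Finset.mem_attach _ _⟩ :
      (Finset.Icc 1 (m+1)).attach.Nonempty) (fun k => w k.1 (m+2) + minCost w k.1)
  have hk2 := Finset.mem_Icc.mp k.2
  have hS : (jumpSeq w (m+2)) ∈
      {k | 1 ≤ k ∧ k < m+2 ∧ w k (m+2) + minCost w k = minCost w (m+2)} := by
    have hj : jumpSeq w (m+2) =
        sInf {k | 1 ≤ k ∧ k < m+2 ∧ w k (m+2) + minCost w k = minCost w (m+2)} := by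
      simp [jumpSeq]
    rw [hj]
    apply Nat.sInf_mem
    exact ⟨k.1, hk2.1, by omega, by rw [hmc, hk]⟩
  exact ⟨hS.1, hS.2.1, hS.2.2⟩

lemma elog_le (x : ℝ) (hx : 0 < x) : Real.exp 1 * Real.log x ≤ x := by
  have h := Real.log_le_sub_one_of_pos (x := x / Real.exp 1) (by positivity)
  rw [Real.log_div (ne_of_gt hx) (Real.exp_ne_zero 1), Real.log_exp] at h
  have he : 0 < Real.exp 1 := Real.exp_pos 1
  have h2 : Real.exp 1 * Real.log x ≤ Real.exp 1 * (x / Real.exp 1) :=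
    mul_le_mul_of_nonneg_left (by linarith) he.le
  rwa [mul_div_cancel₀ _ (ne_of_gt he)] at h2

lemma minCost_lower (w : ℕ → ℕ → ℝ) (hw : ∀ i j : ℕ, w i j = (j : ℝ) / (i : ℝ)) :
    ∀ q p : ℕ, minCost w ((jumpSeq w)^[q] p) +
      Real.exp 1 * (Real.log p - Real.log ((jumpSeq w)^[q] p)) ≤ minCost w p := by
  intro q
  induction q with
  | zero => intro p; simp
  | succ q IH =>
    intro p
    rw [Function.iterate_succ_apply]
    by_cases hp : p ≤ 1
    · rw [jumpSeq_le_one w p hp, Function.iterate_fixed (jumpSeq_le_one w 1 le_rfl)]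
      interval_cases p <;> simp [minCost_zero, minCost_one]
    · push_neg at hp
      obtain ⟨h1, h2, h3⟩ := jumpSeq_spec w p (by omega)
      set a := jumpSeq w p with ha
      have hIH := IH a
      have hap : (0:ℝ) < (a:ℝ) := by exact_mod_cast h1
      have hpp : (0:ℝ) < (p:ℝ) := by positivity
      have hx : Real.exp 1 * Real.log ((p:ℝ)/(a:ℝ)) ≤ (p:ℝ)/(a:ℝ) :=
        elog_le _ (by positivity)
      rw [Real.log_div (ne_of_gt hpp) (ne_of_gt hap)] at hx
      have hwap : w a p = (p:ℝ)/(a:ℝ) := hw a p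
      rw [hwap] at h3
      linarith


lemma iter_one (w : ℕ → ℕ → ℝ) :
    ∀ k p : ℕ, 1 ≤ p → p ≤ k + 1 → (jumpSeq w)^[k] p = 1 := by
  intro k
  induction k with
  | zero => intro p h1 h2; interval_cases p; simp
  | succ k IH =>
    intro p h1 h2
    rw [Function.iterate_succ_apply]
    by_cases hp : p ≤ 1
    · rw [jumpSeq_le_one w p hp]; exact IH 1 le_rfl (by omega)
    · obtain ⟨ha1, ha2, -⟩ := jumpSeq_spec w p (by omega)
      exact IH _ ha1 (by omega)

lemma minCost_ge (w : ℕ → ℕ → ℝ) (hw : ∀ i j : ℕ, w i j = (j : ℝ) / (i : ℝ))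
    (N : ℕ) (hN : 1 ≤ N) : Real.exp 1 * Real.log N ≤ minCost w N := by
  have h := minCost_lower w hw (N - 1) N
  rw [iter_one w (N-1) N hN (by omega)] at h
  simp [minCost_one] at h
  linarith

lemma iter_ge (w : ℕ → ℕ → ℝ) :
    ∀ q p n : ℕ, 2 ≤ n → (jumpSeq w)^[q] p = n → n + q ≤ p := by
  intro q
  induction q with
  | zero => intro p n h1 h2; simp at h2; omega
  | succ q IH =>
    intro p n h1 h2
    rw [Function.iterate_succ_apply] at h2
    by_cases hp : p ≤ 1
    · rw [jumpSeq_le_one w p hp, Function.iterate_fixed (jumpSeq_le_one w 1 le_rfl)] at h2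
      omega
    · obtain ⟨-, ha2, -⟩ := jumpSeq_spec w p (by omega)
      have := IH _ _ h1 h2
      omega

theorem stmt_19 (w : ℕ → ℕ → ℝ) (hw : ∀ i j : ℕ, w i j = (j : ℝ) / (i : ℝ))
    (α : ℝ) (n : ℕ) (hn : 1 ≤ n)
    (hbig : Real.exp 1 * Real.log n + α < minCost w n)
    (hupper : ∀ ε : ℝ, 0 < ε → ∀ᶠ N : ℕ in Filter.atTop,
      minCost w N ≤ Real.exp 1 * Real.log N + α + ε) :
    n ∉ {m : ℕ | ∀ q : ℕ, ∃ p : ℕ, (jumpSeq w)^[q] p = m} := by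
  intro hyp
  rcases eq_or_lt_of_le hn with h1 | h2
  · -- n = 1 : α < 0, contradict lower bound
    have hn1 : n = 1 := h1.symm
    subst hn1
    have hα : α < 0 := by
      simpa [minCost_one] using hbig
    obtain ⟨N, hN1, hN2⟩ := (((hupper (-α/2) (by linarith)).and
      (Filter.eventually_ge_atTop 1)).exists)
    have := minCost_ge w hw N hN2
    linarith
  · -- n ≥ 2
    have hn2 : 2 ≤ n := h2
    set δ := minCost w n - Real.exp 1 * Real.log n - α with hδ
    have hδpos : 0 < δ := by simp [hδ]; linarith
    obtain ⟨M, hM⟩ := Filter.eventually_atTop.mp (hupper (δ/2) (by linarith))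
    obtain ⟨p, hp⟩ := hyp M
    have hpM : n + M ≤ p := iter_ge w M p n hn2 hp
    have hub := hM p (by omega)
    have hlb := minCost_lower w hw M p
    rw [hp] at hlb
    linarith
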